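/- Let N ≥ 1 be an integer and a > 0. Suppose f : ℝ^N → ℝ is four times continuously differentiable on a neighborhood of the closed ball {|x| ≤ a}, is radial in the sense that f(x) = φ(|x|) for a function φ : [0, a] → ℝ, satisfies Δ(Δf)(x) = 1 for all |x| < a, and satisfies ∫_{|x|<a} Δf dx ≤ 0. Then φ′(r) < 0 for all r ∈ (0, a). Moreover, if b > 0 and g : ℝ^N → ℝ is four times continuously differentiable on a neighborhood of {|x| ≤ b}, radial with g(x) = ψ(|x|), satisfies Δ(Δg)(x) = 0 for all |x| < b and ∫_{|x|<b} Δg dx ≤ 0, then Δg is constant on {|x| < b} and ψ′(r) ≤ 0 for all r ∈ (0, b). -/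

import Mathlib

open MeasureTheory Real

/-- The Laplacian of `f : ℝ^N → ℝ`: the sum of the second partial derivatives
`∑ i, ∂²f/∂xᵢ²` (the trace of the Hessian). -/
noncomputable def laplacian {N : ℕ} (f : EuclideanSpace ℝ (Fin N) → ℝ)
    (x : EuclideanSpace ℝ (Fin N)) : ℝ :=
  ∑ i : Fin N, fderiv ℝ (fun y => fderiv ℝ f y (EuclideanSpace.single i 1)) x
    (EuclideanSpace.single i 1)

open Set Metric Filter

lemma myHasFDerivAt_norm {N : ℕ} {x : EuclideanSpace ℝ (Fin N)} (hx : x ≠ 0) :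
    HasFDerivAt (fun y : EuclideanSpace ℝ (Fin N) => ‖y‖) (‖x‖⁻¹ • innerSL ℝ x) x := by
  have hxn : ‖x‖ ≠ 0 := norm_ne_zero_iff.mpr hx
  have hinner : HasFDerivAt (fun y : EuclideanSpace ℝ (Fin N) => (inner ℝ y y : ℝ))
      ((fderivInnerCLM ℝ (x, x)).comp ((ContinuousLinearMap.id ℝ _).prod
        (ContinuousLinearMap.id ℝ _))) x :=
    (hasFDerivAt_id x).inner ℝ (hasFDerivAt_id x)
  have h0 : (inner ℝ x x : ℝ) ≠ 0 := by
    rw [real_inner_self_eq_norm_mul_norm]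
    positivity
  have h := (Real.hasDerivAt_sqrt h0).comp_hasFDerivAt (f := fun y : EuclideanSpace ℝ (Fin N) => (inner ℝ y y : ℝ)) x hinner
  have hfun : (fun y : EuclideanSpace ℝ (Fin N) => Real.sqrt (inner ℝ y y : ℝ))
      = fun y : EuclideanSpace ℝ (Fin N) => ‖y‖ := by
    funext y
    rw [real_inner_self_eq_norm_mul_norm, Real.sqrt_mul_self (norm_nonneg y)]
  rw [show ((fun x => √x) ∘ fun y : EuclideanSpace ℝ (Fin N) => (inner ℝ y y : ℝ)) = fun y : EuclideanSpace ℝ (Fin N) => ‖y‖ from hfun] at h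
  refine h.congr_fderiv ?_
  ext v
  simp only [ContinuousLinearMap.coe_smul', Pi.smul_apply, innerSL_apply_apply,
    ContinuousLinearMap.coe_comp', Function.comp_apply, ContinuousLinearMap.smul_apply,
    ContinuousLinearMap.prod_apply, ContinuousLinearMap.coe_id', id_eq, fderivInnerCLM_apply,
    smul_eq_mul]
  rw [real_inner_self_eq_norm_mul_norm, Real.sqrt_mul_self (norm_nonneg x),
    real_inner_comm v x]
  field_simp
  ring

lemma sum_sq_eq {N : ℕ} (x : EuclideanSpace ℝ (Fin N)) : ∑ i, (x i)^2 = ‖x‖^2 := by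
  rw [EuclideanSpace.norm_eq, Real.sq_sqrt]
  · simp [Real.norm_eq_abs, sq_abs]
  · positivity

lemma radial_fderiv {N : ℕ} {u : EuclideanSpace ℝ (Fin N) → ℝ} {w : ℝ → ℝ} {R : ℝ}
    (hw : ∀ s ∈ Ioo (0:ℝ) R, DifferentiableAt ℝ w s)
    (hu : ∀ y : EuclideanSpace ℝ (Fin N), 0 < ‖y‖ → ‖y‖ < R → u y = w ‖y‖)
    {y : EuclideanSpace ℝ (Fin N)} (hy0 : 0 < ‖y‖) (hyR : ‖y‖ < R) :
    fderiv ℝ u y = deriv w ‖y‖ • (‖y‖⁻¹ • innerSL ℝ y) := by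
  have hyne : y ≠ 0 := by simpa using norm_pos_iff.mp hy0
  have h : HasFDerivAt (fun z : EuclideanSpace ℝ (Fin N) => w ‖z‖)
      (deriv w ‖y‖ • (‖y‖⁻¹ • innerSL ℝ y)) y :=
    ((hw _ ⟨hy0, hyR⟩).hasDerivAt).comp_hasFDerivAt y (myHasFDerivAt_norm hyne)
  have hS : IsOpen {z : EuclideanSpace ℝ (Fin N) | 0 < ‖z‖ ∧ ‖z‖ < R} := by
    have : {z : EuclideanSpace ℝ (Fin N) | 0 < ‖z‖ ∧ ‖z‖ < R}
        = (fun z : EuclideanSpace ℝ (Fin N) => ‖z‖) ⁻¹' (Ioo 0 R) := rfl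
    rw [this]
    exact isOpen_Ioo.preimage continuous_norm
  have heq : u =ᶠ[nhds y] fun z => w ‖z‖ := by
    filter_upwards [hS.mem_nhds (by exact ⟨hy0, hyR⟩)] with z hz
    exact hu z hz.1 hz.2
  rw [heq.fderiv_eq]
  exact h.fderiv

lemma radial_laplacian {N : ℕ} {u : EuclideanSpace ℝ (Fin N) → ℝ} {w : ℝ → ℝ} {R : ℝ}
    {x : EuclideanSpace ℝ (Fin N)}
    (hw : ∀ s ∈ Ioo (0:ℝ) R, DifferentiableAt ℝ w s)
    (hw2 : DifferentiableAt ℝ (deriv w) ‖x‖)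
    (hu : ∀ y : EuclideanSpace ℝ (Fin N), 0 < ‖y‖ → ‖y‖ < R → u y = w ‖y‖)
    (hx0 : 0 < ‖x‖) (hxR : ‖x‖ < R) :
    laplacian u x = deriv (deriv w) ‖x‖ + ((N:ℝ) - 1) * deriv w ‖x‖ / ‖x‖ := by
  have hxne : x ≠ 0 := by simpa using norm_pos_iff.mp hx0
  have hrne : ‖x‖ ≠ 0 := ne_of_gt hx0
  have hS : IsOpen {z : EuclideanSpace ℝ (Fin N) | 0 < ‖z‖ ∧ ‖z‖ < R} := by
    have : {z : EuclideanSpace ℝ (Fin N) | 0 < ‖z‖ ∧ ‖z‖ < R}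
        = (fun z : EuclideanSpace ℝ (Fin N) => ‖z‖) ⁻¹' (Ioo 0 R) := rfl
    rw [this]; exact isOpen_Ioo.preimage continuous_norm
  -- derivative CLMs
  have hnorm := myHasFDerivAt_norm hxne
  have h1 : HasFDerivAt (fun y : EuclideanSpace ℝ (Fin N) => deriv w ‖y‖)
      (deriv (deriv w) ‖x‖ • (‖x‖⁻¹ • innerSL ℝ x)) x :=
    hw2.hasDerivAt.comp_hasFDerivAt x hnorm
  have h2 : HasFDerivAt (fun y : EuclideanSpace ℝ (Fin N) => ‖y‖⁻¹)
      ((-(‖x‖ ^ 2)⁻¹) • (‖x‖⁻¹ • innerSL ℝ x)) x :=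
    (hasDerivAt_inv hrne).comp_hasFDerivAt x hnorm
  have key : ∀ i : Fin N,
      fderiv ℝ (fun y => fderiv ℝ u y (EuclideanSpace.single i 1)) x
        (EuclideanSpace.single i 1)
      = deriv (deriv w) ‖x‖ * (‖x‖⁻¹ * x i) * (‖x‖⁻¹ * x i)
        + deriv w ‖x‖ * (‖x‖⁻¹ * 1 + x i * (-(‖x‖ ^ 2)⁻¹ * (‖x‖⁻¹ * x i))) := by
    intro i
    have h3 : HasFDerivAt (fun y : EuclideanSpace ℝ (Fin N) => y i)
        (EuclideanSpace.proj (𝕜 := ℝ) i) x := (EuclideanSpace.proj (𝕜 := ℝ) i).hasFDerivAt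
    have hd : HasFDerivAt (fun y : EuclideanSpace ℝ (Fin N) => ‖y‖⁻¹ * y i)
        (‖x‖⁻¹ • (EuclideanSpace.proj (𝕜 := ℝ) i)
          + (x i) • ((-(‖x‖ ^ 2)⁻¹) • (‖x‖⁻¹ • innerSL ℝ x))) x := h2.mul h3
    have hprod : HasFDerivAt (fun y : EuclideanSpace ℝ (Fin N) => deriv w ‖y‖ * (‖y‖⁻¹ * y i))
        (deriv w ‖x‖ • (‖x‖⁻¹ • (EuclideanSpace.proj (𝕜 := ℝ) i)
            + (x i) • ((-(‖x‖ ^ 2)⁻¹) • (‖x‖⁻¹ • innerSL ℝ x)))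
          + (‖x‖⁻¹ * x i) • (deriv (deriv w) ‖x‖ • (‖x‖⁻¹ • innerSL ℝ x))) x := h1.mul hd
    have heq : (fun y => fderiv ℝ u y (EuclideanSpace.single i 1))
        =ᶠ[nhds x] fun y => deriv w ‖y‖ * (‖y‖⁻¹ * y i) := by
      filter_upwards [hS.mem_nhds (by exact ⟨hx0, hxR⟩)] with z hz
      rw [radial_fderiv hw hu hz.1 hz.2]
      simp [EuclideanSpace.inner_single_right, mul_comm]
    rw [heq.fderiv_eq, hprod.fderiv]
    simp [EuclideanSpace.inner_single_right, EuclideanSpace.single_apply]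
    ring
  rw [laplacian]
  rw [Finset.sum_congr rfl (fun i _ => key i)]
  rw [Finset.sum_add_distrib]
  have e1 : ∑ i : Fin N, deriv (deriv w) ‖x‖ * (‖x‖⁻¹ * x i) * (‖x‖⁻¹ * x i)
      = deriv (deriv w) ‖x‖ := by
    have : ∀ i : Fin N, deriv (deriv w) ‖x‖ * (‖x‖⁻¹ * x i) * (‖x‖⁻¹ * x i)
        = (deriv (deriv w) ‖x‖ * ‖x‖⁻¹ * ‖x‖⁻¹) * (x i)^2 := by intro i; ring
    rw [Finset.sum_congr rfl (fun i _ => this i), ← Finset.mul_sum, sum_sq_eq]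
    field_simp
  have e2 : ∑ i : Fin N, deriv w ‖x‖ * (‖x‖⁻¹ * 1 + x i * (-(‖x‖ ^ 2)⁻¹ * (‖x‖⁻¹ * x i)))
      = ((N:ℝ) - 1) * deriv w ‖x‖ / ‖x‖ := by
    have : ∀ i : Fin N, deriv w ‖x‖ * (‖x‖⁻¹ * 1 + x i * (-(‖x‖ ^ 2)⁻¹ * (‖x‖⁻¹ * x i)))
        = deriv w ‖x‖ * ‖x‖⁻¹ + (-(deriv w ‖x‖ * (‖x‖ ^ 2)⁻¹ * ‖x‖⁻¹)) * (x i)^2 := by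
      intro i; ring
    rw [Finset.sum_congr rfl (fun i _ => this i), Finset.sum_add_distrib, Finset.sum_const,
      Finset.card_univ, Fintype.card_fin, ← Finset.mul_sum, sum_sq_eq]
    field_simp
    linear_combination (deriv w ‖x‖ * (N:ℝ)) * mul_inv_cancel₀ hrne
  rw [e1, e2]

-- parity helpers
lemma deriv_of_even {F : ℝ → ℝ} {c : ℝ} (he : ∀ t, |t| < c → F (-t) = F t)
    {t : ℝ} (ht : |t| < c) : deriv F (-t) = -deriv F t := by
  have hopen : IsOpen {s : ℝ | |s| < c} := isOpen_lt continuous_abs continuous_const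
  have h1 : F =ᶠ[nhds t] fun s => F (-s) := by
    filter_upwards [hopen.mem_nhds ht] with s hs
    exact (he s hs).symm
  have : deriv F t = deriv (fun s => F (-s)) t := h1.deriv_eq
  rw [deriv_comp_neg] at this
  linarith

lemma deriv_of_odd {F : ℝ → ℝ} {c : ℝ} (ho : ∀ t, |t| < c → F (-t) = -F t)
    {t : ℝ} (ht : |t| < c) : deriv F (-t) = deriv F t := by
  have hopen : IsOpen {s : ℝ | |s| < c} := isOpen_lt continuous_abs continuous_const
  have h1 : F =ᶠ[nhds t] fun s => -F (-s) := by
    filter_upwards [hopen.mem_nhds ht] with s hs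
    rw [ho s hs]; ring
  have : deriv F t = deriv (fun s => -F (-s)) t := h1.deriv_eq
  rw [deriv.fun_neg, deriv_comp_neg] at this
  simpa using this.symm

lemma pow_cast_helper (N : ℕ) (hN : 1 ≤ N) {s : ℝ} (hs : s ≠ 0) :
    ((N - 1 : ℕ) : ℝ) * s ^ (N - 1 - 1) = ((N : ℝ) - 1) * s ^ (N - 1) / s := by
  obtain ⟨m, rfl⟩ : ∃ m, N = m + 1 := ⟨N - 1, (Nat.succ_pred_eq_of_pos hN).symm⟩
  rcases Nat.eq_zero_or_pos m with rfl | hm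
  · simp
  · obtain ⟨k, rfl⟩ : ∃ k, m = k + 1 := ⟨m - 1, (Nat.succ_pred_eq_of_pos hm).symm⟩
    simp only [Nat.add_sub_cancel]
    push_cast
    rw [pow_succ]
    field_simp
    ring

lemma pair_const {F : ℝ → ℝ} {R : ℝ}
    (hd : ∀ s ∈ Ioo (0:ℝ) R, HasDerivAt F 0 s) :
    ∀ s ∈ Ioo (0:ℝ) R, ∀ t ∈ Ioo (0:ℝ) R, F s = F t := by
  intro s hs t ht
  refine (convex_Ioo (0:ℝ) R).is_const_of_fderivWithin_eq_zero (𝕜 := ℝ) (f := F)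
    (fun z hz => ((hd z hz).differentiableAt).differentiableWithinAt) (fun z hz => ?_) hs ht
  rw [fderivWithin_of_isOpen isOpen_Ioo hz, (hd z hz).hasFDerivAt.fderiv]
  ext; simp

lemma const_of_deriv_zero_tendsto {F : ℝ → ℝ} {R L : ℝ} (hR : 0 < R)
    (hd : ∀ s ∈ Ioo (0:ℝ) R, HasDerivAt F 0 s)
    (ht : Tendsto F (nhdsWithin 0 (Ioi 0)) (nhds L)) :
    ∀ s ∈ Ioo (0:ℝ) R, F s = L := by
  intro s hs
  have hmem : R/2 ∈ Ioo (0:ℝ) R := ⟨by linarith, by linarith⟩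
  have h1 : F s = F (R/2) := pair_const hd s hs _ hmem
  have h2 : F =ᶠ[nhdsWithin 0 (Ioi 0)] fun _ => F (R/2) := by
    filter_upwards [Ioo_mem_nhdsGT_of_mem (show (0:ℝ) ∈ Ico 0 R from ⟨le_refl _, hR⟩)] with z hz
    exact pair_const hd z hz _ hmem
  have h3 : Tendsto (fun _ : ℝ => F (R/2)) (nhdsWithin 0 (Ioi 0)) (nhds L) := ht.congr' h2
  have h4 : F (R/2) = L := tendsto_nhds_unique (tendsto_const_nhds (α := ℝ)) h3
  rw [h1, h4]

lemma key_radial {N : ℕ} (hN : 1 ≤ N) {R : ℝ} (hR : 0 < R)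
    {h : EuclideanSpace ℝ (Fin N) → ℝ} {χ : ℝ → ℝ} {κ : ℝ}
    {U : Set (EuclideanSpace ℝ (Fin N))} (hUo : IsOpen U)
    (hUb : Metric.closedBall (0 : EuclideanSpace ℝ (Fin N)) R ⊆ U)
    (hreg : ContDiffOn ℝ 4 h U)
    (hrad : ∀ x : EuclideanSpace ℝ (Fin N), ‖x‖ ≤ R → h x = χ ‖x‖)
    (heq : ∀ x : EuclideanSpace ℝ (Fin N), ‖x‖ < R → laplacian (laplacian h) x = κ) :
    ∃ k₁ : ℝ,
      (∀ x : EuclideanSpace ℝ (Fin N), 0 < ‖x‖ → ‖x‖ < R →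
        laplacian h x = κ * ‖x‖^2/(2*N) + k₁) ∧
      (∀ r ∈ Ioo (0:ℝ) R, deriv (fun t : ℝ =>
          h (t • (EuclideanSpace.single (⟨0, hN⟩ : Fin N) (1:ℝ)))) r
        = κ * r^3/(2*N*(N+2)) + k₁ * r/N) := by
  have hN0 : (N:ℝ) ≠ 0 := Nat.cast_ne_zero.mpr (by omega)
  have hN2 : (N:ℝ) + 2 ≠ 0 := by positivity
  set e₁ : EuclideanSpace ℝ (Fin N) := EuclideanSpace.single (⟨0, hN⟩ : Fin N) (1:ℝ) with he₁def
  have he₁ : ‖e₁‖ = 1 := by rw [he₁def, EuclideanSpace.norm_single]; norm_num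
  have hsn : ∀ t : ℝ, ‖t • e₁‖ = |t| := by
    intro t; rw [norm_smul, he₁, mul_one, Real.norm_eq_abs]
  set q : ℝ → ℝ := fun t => h (t • e₁) with hqdef
  set I : Set ℝ := (fun t : ℝ => t • e₁) ⁻¹' U with hIdef
  have hlin : ContDiff ℝ 4 (fun t : ℝ => t • e₁) := contDiff_id.smul contDiff_const
  have hIo : IsOpen I := hUo.preimage hlin.continuous
  have hIcc : Icc (-R) R ⊆ I := by
    intro t ht
    refine hUb ?_
    rw [Metric.mem_closedBall, dist_zero_right, hsn, abs_le]
    exact ⟨ht.1, ht.2⟩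
  have hIoo : Ioo (0:ℝ) R ⊆ I := fun t ht => hIcc ⟨by linarith [ht.1], le_of_lt ht.2⟩
  have h0I : (0:ℝ) ∈ I := hIcc ⟨by linarith, by linarith⟩
  have hq : ContDiffOn ℝ 4 q I := hreg.comp hlin.contDiffOn (fun t ht => ht)
  have hradq : ∀ x : EuclideanSpace ℝ (Fin N), ‖x‖ ≤ R → h x = q ‖x‖ := by
    intro x hx
    have h1 : q ‖x‖ = χ ‖(‖x‖ • e₁)‖ := hrad _ (by rw [hsn, abs_of_nonneg (norm_nonneg x)]; exact hx)
    rw [h1, hsn, abs_of_nonneg (norm_nonneg x)]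
    exact hrad x hx
  have hqeven : ∀ t, |t| < R → q (-t) = q t := by
    intro t ht
    have h1 : q (-t) = χ ‖(-t) • e₁‖ := hrad _ (by rw [hsn, abs_neg]; exact le_of_lt ht)
    have h2 : q t = χ ‖t • e₁‖ := hrad _ (by rw [hsn]; exact le_of_lt ht)
    rw [h1, h2, hsn, hsn, abs_neg]
  -- smoothness of derivatives of q
  have hp_cd : ContDiffOn ℝ 3 (deriv q) I := hq.deriv_of_isOpen hIo (by norm_num)
  have hp2_cd : ContDiffOn ℝ 2 (deriv (deriv q)) I := hp_cd.deriv_of_isOpen hIo (by norm_num)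
  have hp3_cd : ContDiffOn ℝ 1 (deriv (deriv (deriv q))) I := hp2_cd.deriv_of_isOpen hIo (by norm_num)
  have hdq : ∀ s ∈ I, DifferentiableAt ℝ q s := fun s hs =>
    (hq.contDiffAt (hIo.mem_nhds hs)).differentiableAt (by norm_num)
  have hdp : ∀ s ∈ I, DifferentiableAt ℝ (deriv q) s := fun s hs =>
    (hp_cd.contDiffAt (hIo.mem_nhds hs)).differentiableAt (by norm_num)
  have hdp2 : ∀ s ∈ I, DifferentiableAt ℝ (deriv (deriv q)) s := fun s hs =>
    (hp2_cd.contDiffAt (hIo.mem_nhds hs)).differentiableAt (by norm_num)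
  have hcp : ∀ s ∈ I, ContinuousAt (deriv q) s := fun s hs =>
    (hp_cd.continuousOn.continuousAt (hIo.mem_nhds hs))
  have hcp2 : ∀ s ∈ I, ContinuousAt (deriv (deriv q)) s := fun s hs =>
    (hp2_cd.continuousOn.continuousAt (hIo.mem_nhds hs))
  have hcp3 : ∀ s ∈ I, ContinuousAt (deriv (deriv (deriv q))) s := fun s hs =>
    (hp3_cd.continuousOn.continuousAt (hIo.mem_nhds hs))
  -- parity values at 0
  have hqodd : ∀ t, |t| < R → deriv q (-t) = -deriv q t := fun t ht => deriv_of_even hqeven ht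
  have hp0 : deriv q 0 = 0 := by
    have := hqodd 0 (by simpa using hR); simp at this; linarith
  have hp2even : ∀ t, |t| < R → deriv (deriv q) (-t) = deriv (deriv q) t := fun t ht =>
    deriv_of_odd (fun s hs => hqodd s hs) ht
  have hp30 : deriv (deriv (deriv q)) 0 = 0 := by
    have := deriv_of_even hp2even (show |(0:ℝ)| < R by simpa using hR)
    simp at this; linarith
  -- the radial profile of the Laplacian
  set w : ℝ → ℝ := fun s => deriv (deriv q) s + ((N:ℝ) - 1) * deriv q s / s with hwdef
  have hlaph : ∀ x : EuclideanSpace ℝ (Fin N), 0 < ‖x‖ → ‖x‖ < R →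
      laplacian h x = w ‖x‖ := by
    intro x h0 hR'
    have hmem : ‖x‖ ∈ Ioo (0:ℝ) R := ⟨h0, hR'⟩
    exact radial_laplacian (fun s hs => hdq s (hIoo hs)) (hdp ‖x‖ (hIoo hmem))
      (fun y h1 h2 => hradq y (le_of_lt h2)) h0 hR'
  have hw_cd : ContDiffOn ℝ 2 w (Ioo 0 R) := by
    refine ContDiffOn.add (hp2_cd.mono hIoo) ?_
    exact ((contDiffOn_const.mul ((hp_cd.of_le (by norm_num)).mono hIoo)).div
      contDiffOn_id (fun s hs => ne_of_gt hs.1))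
  have hw_diff : ∀ s ∈ Ioo (0:ℝ) R, DifferentiableAt ℝ w s := fun s hs =>
    (hw_cd.contDiffAt (isOpen_Ioo.mem_nhds hs)).differentiableAt (by norm_num)
  have hdw_cd : ContDiffOn ℝ 1 (deriv w) (Ioo 0 R) := hw_cd.deriv_of_isOpen isOpen_Ioo (by norm_num)
  have hdw_diff : ∀ s ∈ Ioo (0:ℝ) R, DifferentiableAt ℝ (deriv w) s := fun s hs =>
    (hdw_cd.contDiffAt (isOpen_Ioo.mem_nhds hs)).differentiableAt (by norm_num)
  have hODE : ∀ r ∈ Ioo (0:ℝ) R,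
      deriv (deriv w) r + ((N:ℝ) - 1) * deriv w r / r = κ := by
    intro r hr
    have hx : ‖(r • e₁ : EuclideanSpace ℝ (Fin N))‖ = r := by
      rw [hsn, abs_of_pos hr.1]
    have h1 := radial_laplacian (u := laplacian h) (w := w) hw_diff
      (by rw [hx]; exact hdw_diff r hr) (fun y hy1 hy2 => hlaph y hy1 hy2)
      (x := r • e₁) (by rw [hx]; exact hr.1) (by rw [hx]; exact hr.2)
    rw [hx] at h1
    rw [← h1]
    exact heq _ (by rw [hx]; exact hr.2)
  have hderiv_w : ∀ s ∈ Ioo (0:ℝ) R, deriv w s = deriv (deriv (deriv q)) s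
      + (((N:ℝ) - 1) * deriv (deriv q) s * s - ((N:ℝ) - 1) * deriv q s) / s^2 := by
    intro s hs
    have hsI := hIoo hs
    have h1 : HasDerivAt (fun y => ((N:ℝ) - 1) * deriv q y)
        (((N:ℝ) - 1) * deriv (deriv q) s) s := ((hdp s hsI).hasDerivAt).const_mul _
    have h2 : HasDerivAt (fun y : ℝ => y) 1 s := hasDerivAt_id s
    have h3 := h1.div h2 (ne_of_gt hs.1)
    have h4 := ((hdp2 s hsI).hasDerivAt).add h3
    have h5 : HasDerivAt w (deriv (deriv (deriv q)) s +
        (((N:ℝ) - 1) * deriv (deriv q) s * s - ((N:ℝ) - 1) * deriv q s * 1) / s ^ 2) s := h4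
    simpa using h5.deriv
  -- L'Hopital limit
  have hlhop : Tendsto (fun s => (deriv (deriv q) s * s - deriv q s) / s^2)
      (nhdsWithin 0 (Ioi 0)) (nhds 0) := by
    have hff : ∀ x ∈ Ioo (0:ℝ) R, HasDerivAt (fun s => deriv (deriv q) s * s - deriv q s)
        (deriv (deriv (deriv q)) x * x) x := by
      intro x hx
      have hxI := hIoo hx
      have := (((hdp2 x hxI).hasDerivAt).mul (hasDerivAt_id x)).sub ((hdp x hxI).hasDerivAt)
      refine this.congr_deriv ?_
      simp only [id_eq]
      ring
    have hgg : ∀ x ∈ Ioo (0:ℝ) R, HasDerivAt (fun s : ℝ => s^2) (2*x) x := by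
      intro x _; simpa using hasDerivAt_pow 2 x
    have hg' : ∀ x ∈ Ioo (0:ℝ) R, (2*x) ≠ 0 := fun x hx => (mul_pos two_pos hx.1).ne'
    have hfa : Tendsto (fun s => deriv (deriv q) s * s - deriv q s)
        (nhdsWithin 0 (Ioi 0)) (nhds 0) := by
      have h1 : Tendsto (fun s => deriv (deriv q) s * s - deriv q s) (nhds 0)
          (nhds (deriv (deriv q) 0 * 0 - deriv q 0)) :=
        ((hcp2 0 h0I).mul tendsto_id).sub (hcp 0 h0I)
      rw [mul_zero, hp0, sub_zero] at h1
      exact h1.mono_left nhdsWithin_le_nhds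
    have hga : Tendsto (fun s : ℝ => s^2) (nhdsWithin 0 (Ioi 0)) (nhds 0) := by
      have := ((continuous_pow 2).tendsto (0:ℝ)).mono_left
        (nhdsWithin_le_nhds (s := Ioi (0:ℝ)))
      simpa using this
    have hdiv : Tendsto (fun x => (deriv (deriv (deriv q)) x * x) / (2*x))
        (nhdsWithin 0 (Ioi 0)) (nhds 0) := by
      have h1 : Tendsto (fun x => deriv (deriv (deriv q)) x / 2)
          (nhdsWithin 0 (Ioi 0)) (nhds 0) := by
        have := ((hcp3 0 h0I).div_const 2).tendsto.mono_left
          (nhdsWithin_le_nhds (s := Ioi (0:ℝ)))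
        rw [hp30] at this
        simpa using this
      refine h1.congr' ?_
      filter_upwards [self_mem_nhdsWithin] with x hx
      have hx0 : x ≠ 0 := ne_of_gt hx
      field_simp
    exact HasDerivAt.lhopital_zero_right_on_Ioo hR hff hgg hg' hfa hga hdiv
  -- limits of pieces
  have hT0 : Tendsto (fun s : ℝ => s^(N-1)) (nhdsWithin 0 (Ioi 0)) (nhds ((0:ℝ)^(N-1))) :=
    ((continuous_pow (N-1)).tendsto (0:ℝ)).mono_left nhdsWithin_le_nhds
  have hTp3 : Tendsto (fun s => deriv (deriv (deriv q)) s) (nhdsWithin 0 (Ioi 0)) (nhds 0) := by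
    have := (hcp3 0 h0I).tendsto.mono_left (nhdsWithin_le_nhds (s := Ioi (0:ℝ)))
    rwa [hp30] at this
  -- stage A : s^(N-1) * (deriv w) s = κ * s^N / N
  have hA : ∀ s ∈ Ioo (0:ℝ) R, s^(N-1) * deriv w s - κ * s^N / N = 0 := by
    apply const_of_deriv_zero_tendsto hR
    · intro s hs
      have h1 := (hasDerivAt_pow (N-1) s).mul ((hdw_diff s hs).hasDerivAt)
      have h2 := ((hasDerivAt_pow N s).const_mul κ).div_const (N:ℝ)
      have h3 := h1.sub h2
      have hdd : deriv (deriv w) s = κ - ((N:ℝ) - 1) * deriv w s / s := by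
        have := hODE s hs; linarith
      have hval : ↑(N-1) * s ^ (N - 1 - 1) * deriv w s + s ^ (N-1) * deriv (deriv w) s
          - κ * (↑N * s ^ (N - 1)) / ↑N = 0 := by
        rw [hdd, pow_cast_helper N hN (ne_of_gt hs.1)]
        field_simp
        ring
      rwa [hval] at h3
    · have hTA : Tendsto (fun s : ℝ => s^(N-1) * deriv w s) (nhdsWithin 0 (Ioi 0)) (nhds 0) := by
        have hev : (fun s : ℝ => s^(N-1) * deriv w s) =ᶠ[nhdsWithin 0 (Ioi 0)]
            (fun s : ℝ => s^(N-1) * deriv (deriv (deriv q)) s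
              + ((N:ℝ) - 1) * (s^(N-1) * ((deriv (deriv q) s * s - deriv q s) / s^2))) := by
          filter_upwards [Ioo_mem_nhdsGT_of_mem (show (0:ℝ) ∈ Ico 0 R from ⟨le_refl _, hR⟩)]
            with s hs
          rw [hderiv_w s hs]
          ring
        have hT1 := hT0.mul hTp3
        have hT2 := ((hT0.mul hlhop).const_mul ((N:ℝ) - 1))
        have := (hT1.add hT2).congr' hev.symm
        simpa using this
      have hTB : Tendsto (fun s : ℝ => κ * s^N / ↑N) (nhdsWithin 0 (Ioi 0)) (nhds 0) := by
        have := ((((continuous_pow N).tendsto (0:ℝ)).const_mul κ).div_const (N:ℝ)).mono_left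
          (nhdsWithin_le_nhds (s := Ioi (0:ℝ)))
        rw [zero_pow (by omega : N ≠ 0)] at this
        simpa using this
      simpa using hTA.sub hTB
  have hdw_eq : ∀ s ∈ Ioo (0:ℝ) R, deriv w s = κ * s / N := by
    intro s hs
    have h1 := hA s hs
    have hs1 : s^(N-1) ≠ 0 := pow_ne_zero _ (ne_of_gt hs.1)
    have hsN : (s:ℝ)^N = s^(N-1) * s := by
      conv_lhs => rw [← Nat.sub_add_cancel hN]
      rw [pow_succ]
    rw [hsN] at h1
    have h2 : s^(N-1) * deriv w s = s^(N-1) * (κ * s / ↑N) := by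
      linear_combination h1
    exact mul_left_cancel₀ hs1 h2
  -- stage B : w is κ s²/(2N) + k₁
  set k₁ : ℝ := w (R/2) - κ * (R/2)^2/(2*N) with hk₁def
  have hw_val : ∀ s ∈ Ioo (0:ℝ) R, w s = κ * s^2/(2*N) + k₁ := by
    have hBd : ∀ s ∈ Ioo (0:ℝ) R,
        HasDerivAt (fun s => w s - κ * s^2/(2*N)) 0 s := by
      intro s hs
      have h1 := ((hw_diff s hs).hasDerivAt).sub
        (((hasDerivAt_pow 2 s).const_mul κ).div_const (2*(N:ℝ)))
      refine h1.congr_deriv ?_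
      rw [hdw_eq s hs]
      norm_num
      field_simp
      ring
    intro s hs
    have hmem : R/2 ∈ Ioo (0:ℝ) R := ⟨by linarith, by linarith⟩
    have := pair_const hBd s hs _ hmem
    rw [hk₁def]
    linarith
  refine ⟨k₁, ?_, ?_⟩
  · intro x h0 hRx
    rw [hlaph x h0 hRx, hw_val ‖x‖ ⟨h0, hRx⟩]
  -- stage C : the radial derivative of q
  have hC : ∀ s ∈ Ioo (0:ℝ) R,
      s^(N-1) * deriv q s - (κ * s^(N+2)/(2*N*(N+2)) + k₁ * s^N/N) = 0 := by
    apply const_of_deriv_zero_tendsto hR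
    · intro s hs
      have hsI := hIoo hs
      have h1 := (hasDerivAt_pow (N-1) s).mul ((hdp s hsI).hasDerivAt)
      have h2 := (((hasDerivAt_pow (N+2) s).const_mul κ).div_const (2*(N:ℝ)*(N+2))).add
        (((hasDerivAt_pow N s).const_mul k₁).div_const (N:ℝ))
      have h3 := h1.sub h2
      have hp2v : deriv (deriv q) s = w s - ((N:ℝ) - 1) * deriv q s / s := by
        simp only [hwdef]
        ring
      have hval : ↑(N-1) * s ^ (N - 1 - 1) * deriv q s + s ^ (N-1) * deriv (deriv q) s
          - (κ * (↑(N+2) * s ^ (N + 2 - 1)) / (2*(N:ℝ)*(N+2))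
            + k₁ * (↑N * s ^ (N - 1)) / (N:ℝ)) = 0 := by
        rw [hp2v, hw_val s hs, pow_cast_helper N hN (ne_of_gt hs.1)]
        have e1 : s ^ (N + 2 - 1) = s ^ (N-1) * s^2 := by
          rw [← pow_add]
          congr 1
          omega
        rw [e1]
        push_cast
        field_simp
        ring
      rwa [hval] at h3
    · have hTq : Tendsto (fun s : ℝ => s^(N-1) * deriv q s) (nhdsWithin 0 (Ioi 0)) (nhds 0) := by
        have hTp : Tendsto (deriv q) (nhdsWithin 0 (Ioi 0)) (nhds 0) := by
          have := (hcp 0 h0I).tendsto.mono_left (nhdsWithin_le_nhds (s := Ioi (0:ℝ)))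
          rwa [hp0] at this
        have := hT0.mul hTp
        simpa using this
      have hT1 : Tendsto (fun s : ℝ => κ * s^(N+2)/(2*(N:ℝ)*(N+2)) + k₁ * s^N/N)
          (nhdsWithin 0 (Ioi 0)) (nhds 0) := by
        have ha := ((((continuous_pow (N+2)).tendsto (0:ℝ)).const_mul κ).div_const
          (2*(N:ℝ)*(N+2))).mono_left (nhdsWithin_le_nhds (s := Ioi (0:ℝ)))
        have hb := ((((continuous_pow N).tendsto (0:ℝ)).const_mul k₁).div_const
          ((N:ℝ))).mono_left (nhdsWithin_le_nhds (s := Ioi (0:ℝ)))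
        rw [zero_pow (by omega : N + 2 ≠ 0)] at ha
        rw [zero_pow (by omega : N ≠ 0)] at hb
        have := ha.add hb
        simpa using this
      simpa using hTq.sub hT1
  intro r hr
  have hqd : deriv q r = κ * r^3/(2*N*(N+2)) + k₁ * r/N := by
    have h1 := hC r hr
    have hr1 : r^(N-1) ≠ 0 := pow_ne_zero _ (ne_of_gt hr.1)
    have e2 : r ^ (N+2) = r ^ (N-1) * r^3 := by
      rw [← pow_add]; congr 1; omega
    have e3 : r ^ N = r ^ (N-1) * r := by
      conv_lhs => rw [← Nat.sub_add_cancel hN]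
      rw [pow_succ]
    rw [e2, e3] at h1
    have h2 : r^(N-1) * deriv q r = r^(N-1) * (κ * r^3/(2*(N:ℝ)*(N+2)) + k₁ * r/N) := by
      linear_combination h1
    exact mul_left_cancel₀ hr1 h2
  exact hqd

lemma laplacian_continuousOn {N : ℕ} {h : EuclideanSpace ℝ (Fin N) → ℝ}
    {U : Set (EuclideanSpace ℝ (Fin N))} (hUo : IsOpen U) (hreg : ContDiffOn ℝ 4 h U) :
    ContinuousOn (laplacian h) U := by
  have key : ∀ i : Fin N, ContinuousOn (fun x =>
      fderiv ℝ (fun y => fderiv ℝ h y (EuclideanSpace.single i 1)) x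
        (EuclideanSpace.single i 1)) U := by
    intro i
    have h1 : ContDiffOn ℝ 3 (fderiv ℝ h) U := hreg.fderiv_of_isOpen hUo (by norm_num)
    have h2 : ContDiffOn ℝ 3 (fun y => fderiv ℝ h y (EuclideanSpace.single i 1)) U :=
      h1.clm_apply contDiffOn_const
    have h3 : ContDiffOn ℝ 2
        (fderiv ℝ (fun y => fderiv ℝ h y (EuclideanSpace.single i 1))) U :=
      h2.fderiv_of_isOpen hUo (by norm_num)
    exact (h3.clm_apply contDiffOn_const).continuousOn
  have : ContinuousOn (fun x => ∑ i : Fin N, fderiv ℝ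
      (fun y => fderiv ℝ h y (EuclideanSpace.single i 1)) x (EuclideanSpace.single i 1)) U := by
    apply continuousOn_finset_sum
    intro i _
    exact key i
  exact this

lemma ball_norm_sq_integral {N : ℕ} (hN : 1 ≤ N) {a : ℝ} (ha : 0 < a) :
    ∫ x in Metric.ball (0 : EuclideanSpace ℝ (Fin N)) a, ‖x‖^2
      = (N:ℝ) * (volume (Metric.ball (0 : EuclideanSpace ℝ (Fin N)) 1)).toReal
        * (a^(N+2)/(N+2)) := by
  haveI : Nontrivial (EuclideanSpace ℝ (Fin N)) := by
    refine ⟨EuclideanSpace.single (⟨0, hN⟩ : Fin N) (1:ℝ), 0, ?_⟩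
    intro hcon
    have h1 : ‖EuclideanSpace.single (⟨0, hN⟩ : Fin N) (1:ℝ)‖ = 1 := by
      rw [EuclideanSpace.norm_single]; norm_num
    rw [hcon] at h1
    simp at h1
  have h1 : ∫ x in Metric.ball (0 : EuclideanSpace ℝ (Fin N)) a, ‖x‖^2
      = ∫ x : EuclideanSpace ℝ (Fin N), (fun t : ℝ => if t < a then t^2 else 0) ‖x‖ := by
    rw [← integral_indicator measurableSet_ball]
    congr 1
    funext x
    classical
    rw [Set.indicator_apply]
    simp only [mem_ball_zero_iff]
  rw [h1, integral_fun_norm_addHaar (volume : Measure (EuclideanSpace ℝ (Fin N)))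
    (fun t : ℝ => if t < a then t^2 else 0)]
  have hdim : Module.finrank ℝ (EuclideanSpace ℝ (Fin N)) = N := finrank_euclideanSpace_fin
  rw [hdim]
  have h2 : ∫ y in Ioi (0:ℝ), y ^ (N - 1) • (if y < a then y^2 else 0)
      = ∫ y in Ioi (0:ℝ), Set.indicator (Iio a) (fun y : ℝ => y^(N+1)) y := by
    apply setIntegral_congr_fun measurableSet_Ioi
    intro y hy
    rw [Set.indicator_apply]
    simp only [mem_Iio, smul_eq_mul]
    by_cases hya : y < a
    · simp only [if_pos hya]
      rw [← pow_add]
      congr 1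
      omega
    · simp [if_neg hya]
  rw [h2, setIntegral_indicator measurableSet_Iio, Ioi_inter_Iio,
    ← integral_Ioc_eq_integral_Ioo, ← intervalIntegral.integral_of_le ha.le,
    integral_pow]
  rw [nsmul_eq_mul, smul_eq_mul]
  rw [zero_pow (by omega : N + 1 + 1 ≠ 0)]
  push_cast
  ring_nf
  rw [measureReal_def]
  ring

/-- Radial monotonicity for the Euclidean two-ball minimizers: a radial `C⁴`
function `f` with `Δ²f = 1` in the ball of radius `a` and `∫_{B_a} Δf ≤ 0` has
strictly decreasing radial profile; and a radial `C⁴` function `g` with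
`Δ²g = 0` in the ball of radius `b` and `∫_{B_b} Δg ≤ 0` has constant Laplacian
and (weakly) decreasing radial profile. -/
theorem stmt_18 (N : ℕ) (hN : 1 ≤ N) (a : ℝ) (ha : 0 < a)
    (f : EuclideanSpace ℝ (Fin N) → ℝ) (φ : ℝ → ℝ)
    (hfreg : ∃ U : Set (EuclideanSpace ℝ (Fin N)), IsOpen U ∧
      Metric.closedBall (0 : EuclideanSpace ℝ (Fin N)) a ⊆ U ∧ ContDiffOn ℝ 4 f U)
    (hfrad : ∀ x : EuclideanSpace ℝ (Fin N), ‖x‖ ≤ a → f x = φ ‖x‖)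
    (hfeq : ∀ x : EuclideanSpace ℝ (Fin N), ‖x‖ < a → laplacian (laplacian f) x = 1)
    (hfint : (∫ x in Metric.ball (0 : EuclideanSpace ℝ (Fin N)) a, laplacian f x) ≤ 0) :
    (∀ r ∈ Set.Ioo (0:ℝ) a, deriv φ r < 0) ∧
    (∀ b : ℝ, 0 < b → ∀ (g : EuclideanSpace ℝ (Fin N) → ℝ) (ψ : ℝ → ℝ),
      (∃ U : Set (EuclideanSpace ℝ (Fin N)), IsOpen U ∧
        Metric.closedBall (0 : EuclideanSpace ℝ (Fin N)) b ⊆ U ∧ ContDiffOn ℝ 4 g U) →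
      (∀ x : EuclideanSpace ℝ (Fin N), ‖x‖ ≤ b → g x = ψ ‖x‖) →
      (∀ x : EuclideanSpace ℝ (Fin N), ‖x‖ < b → laplacian (laplacian g) x = 0) →
      (∫ x in Metric.ball (0 : EuclideanSpace ℝ (Fin N)) b, laplacian g x) ≤ 0 →
      (∃ k : ℝ, ∀ x : EuclideanSpace ℝ (Fin N), ‖x‖ < b → laplacian g x = k) ∧
      (∀ r ∈ Set.Ioo (0:ℝ) b, deriv ψ r ≤ 0)) := by
  have hN0 : (0:ℝ) < (N:ℝ) := by exact_mod_cast Nat.pos_of_ne_zero (by omega)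
  have hN2 : (0:ℝ) < (N:ℝ) + 2 := by linarith
  haveI : Nontrivial (EuclideanSpace ℝ (Fin N)) := by
    refine ⟨EuclideanSpace.single (⟨0, hN⟩ : Fin N) (1:ℝ), 0, fun hcon => ?_⟩
    have h1 : ‖EuclideanSpace.single (⟨0, hN⟩ : Fin N) (1:ℝ)‖ = 1 := by
      rw [EuclideanSpace.norm_single]; norm_num
    rw [hcon] at h1; simp at h1
  set e₁ : EuclideanSpace ℝ (Fin N) := EuclideanSpace.single (⟨0, hN⟩ : Fin N) (1:ℝ) with he₁def
  have hsn : ∀ t : ℝ, ‖t • e₁‖ = |t| := by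
    intro t
    rw [norm_smul, he₁def, EuclideanSpace.norm_single, Real.norm_eq_abs]
    norm_num
  constructor
  · -- f part
    obtain ⟨U, hUo, hUb, hreg⟩ := hfreg
    obtain ⟨k₁, hlapf, hderivf⟩ := key_radial hN ha hUo hUb hreg hfrad hfeq
    set V₁ : ℝ := (volume (Metric.ball (0 : EuclideanSpace ℝ (Fin N)) 1)).toReal with hV₁def
    have hV₁pos : 0 < V₁ := by
      rw [hV₁def]
      exact ENNReal.toReal_pos (measure_ball_pos volume 0 one_pos).ne' measure_ball_lt_top.ne
    have haN : (0:ℝ) < a^N := pow_pos ha N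
    -- rewrite the integral
    have hcongr : (∫ x in Metric.ball (0 : EuclideanSpace ℝ (Fin N)) a, laplacian f x)
        = ∫ x in Metric.ball (0 : EuclideanSpace ℝ (Fin N)) a, (‖x‖^2/(2*N) + k₁) := by
      apply setIntegral_congr_ae measurableSet_ball
      filter_upwards [compl_mem_ae_iff.mpr (measure_singleton
        (0 : EuclideanSpace ℝ (Fin N)))] with x hx hxb
      have hx0 : 0 < ‖x‖ := norm_pos_iff.mpr hx
      rw [hlapf x hx0 (mem_ball_zero_iff.mp hxb)]
      ring
    have hi1 : IntegrableOn (fun x : EuclideanSpace ℝ (Fin N) => ‖x‖^2/(2*(N:ℝ)))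
        (Metric.ball (0 : EuclideanSpace ℝ (Fin N)) a) := by
      have hc : Continuous fun x : EuclideanSpace ℝ (Fin N) => ‖x‖^2/(2*(N:ℝ)) := by
        fun_prop
      exact (hc.continuousOn.integrableOn_compact (isCompact_closedBall _ _)).mono_set
        Metric.ball_subset_closedBall
    have hi2 : IntegrableOn (fun _ : EuclideanSpace ℝ (Fin N) => k₁)
        (Metric.ball (0 : EuclideanSpace ℝ (Fin N)) a) :=
      integrableOn_const measure_ball_lt_top.ne
    have hsplit : (∫ x in Metric.ball (0 : EuclideanSpace ℝ (Fin N)) a, (‖x‖^2/(2*(N:ℝ)) + k₁))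
        = ((N:ℝ) * V₁ * (a^(N+2)/(N+2)))/(2*(N:ℝ))
          + (volume (Metric.ball (0 : EuclideanSpace ℝ (Fin N)) a)).toReal * k₁ := by
      rw [integral_add hi1 hi2, setIntegral_const, smul_eq_mul, integral_div,
        ball_norm_sq_integral hN ha, measureReal_def]
    have hvol : (volume (Metric.ball (0 : EuclideanSpace ℝ (Fin N)) a)).toReal = a^N * V₁ := by
      rw [Measure.addHaar_ball volume (0 : EuclideanSpace ℝ (Fin N)) ha.le,
        finrank_euclideanSpace_fin, ENNReal.toReal_mul, ENNReal.toReal_ofReal (by positivity)]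
    have hineq : (a^N * V₁) * (a^2/(2*((N:ℝ)+2)) + k₁) ≤ 0 := by
      have h1 : ((N:ℝ) * V₁ * (a^(N+2)/(N+2)))/(2*(N:ℝ)) + (a^N * V₁) * k₁
          = (a^N * V₁) * (a^2/(2*((N:ℝ)+2)) + k₁) := by
        rw [pow_add]
        field_simp
      rw [hcongr, hsplit, hvol, h1] at hfint
      exact hfint
    have hk₁ : k₁ ≤ -(a^2/(2*((N:ℝ)+2))) := by
      by_contra hcon
      push_neg at hcon
      have h2 : 0 < a^2/(2*((N:ℝ)+2)) + k₁ := by linarith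
      nlinarith [mul_pos (mul_pos haN hV₁pos) h2]
    intro r hr
    have hev : φ =ᶠ[nhds r] fun t : ℝ => f (t • e₁) := by
      filter_upwards [isOpen_Ioo.mem_nhds hr] with t ht
      rw [hfrad (t • e₁) (by rw [hsn, abs_of_pos ht.1]; exact ht.2.le), hsn,
        abs_of_pos ht.1]
    rw [hev.deriv_eq, hderivf r hr]
    have h4 : k₁ * r/(N:ℝ) ≤ (-(a^2/(2*((N:ℝ)+2)))) * r/(N:ℝ) := by
      gcongr
      exact hr.1.le
    have h7 : (1:ℝ)*r^3/(2*(N:ℝ)*((N:ℝ)+2)) + (-(a^2/(2*((N:ℝ)+2))))*r/(N:ℝ)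
        = r*(r^2-a^2)/(2*(N:ℝ)*((N:ℝ)+2)) := by
      field_simp
      ring
    have h8 : r*(r^2-a^2) < 0 := mul_neg_of_pos_of_neg hr.1 (by nlinarith [hr.2, ha, hr.1])
    have h9 : r*(r^2-a^2)/(2*(N:ℝ)*((N:ℝ)+2)) < 0 :=
      div_neg_of_neg_of_pos h8 (by positivity)
    linarith
  · -- g part
    intro b hb g ψ hgreg hgrad hgeq hgint
    obtain ⟨U', hU'o, hU'b, hg'⟩ := hgreg
    obtain ⟨k₁, hlapg, hderivg⟩ := key_radial hN hb hU'o hU'b hg' hgrad hgeq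
    have hlapg' : ∀ x : EuclideanSpace ℝ (Fin N), 0 < ‖x‖ → ‖x‖ < b →
        laplacian g x = k₁ := by
      intro x h1 h2
      rw [hlapg x h1 h2]
      ring
    haveI := Module.punctured_nhds_neBot ℝ (EuclideanSpace ℝ (Fin N)) (0 : EuclideanSpace ℝ (Fin N))
    have h00 : laplacian g 0 = k₁ := by
      have hcont : ContinuousAt (laplacian g) 0 :=
        (laplacian_continuousOn hU'o hg').continuousAt
          (hU'o.mem_nhds (hU'b (Metric.mem_closedBall_self hb.le)))
      have h1 : Tendsto (laplacian g) (nhdsWithin 0 {(0 : EuclideanSpace ℝ (Fin N))}ᶜ)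
          (nhds (laplacian g 0)) := hcont.tendsto.mono_left nhdsWithin_le_nhds
      have h2 : laplacian g =ᶠ[nhdsWithin 0 {(0 : EuclideanSpace ℝ (Fin N))}ᶜ]
          fun _ => k₁ := by
        filter_upwards [self_mem_nhdsWithin,
          mem_nhdsWithin_of_mem_nhds (Metric.ball_mem_nhds (0 : EuclideanSpace ℝ (Fin N)) hb)]
          with x hx1 hx2
        exact hlapg' x (norm_pos_iff.mpr hx1) (mem_ball_zero_iff.mp hx2)
      exact tendsto_nhds_unique (h1.congr' h2) tendsto_const_nhds
    have hall : ∀ x : EuclideanSpace ℝ (Fin N), ‖x‖ < b → laplacian g x = k₁ := by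
      intro x hx
      by_cases hx0 : x = 0
      · rw [hx0]; exact h00
      · exact hlapg' x (norm_pos_iff.mpr hx0) hx
    have hk₁0 : k₁ ≤ 0 := by
      have hcongr : (∫ x in Metric.ball (0 : EuclideanSpace ℝ (Fin N)) b, laplacian g x)
          = (volume (Metric.ball (0 : EuclideanSpace ℝ (Fin N)) b)).toReal * k₁ := by
        rw [setIntegral_congr_fun measurableSet_ball
          (fun x hx => hall x (mem_ball_zero_iff.mp hx)), setIntegral_const, smul_eq_mul, measureReal_def]
      rw [hcongr] at hgint
      have hvpos : 0 < (volume (Metric.ball (0 : EuclideanSpace ℝ (Fin N)) b)).toReal :=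
        ENNReal.toReal_pos (measure_ball_pos volume 0 hb).ne' measure_ball_lt_top.ne
      nlinarith
    refine ⟨⟨k₁, hall⟩, ?_⟩
    intro r hr
    have hev : ψ =ᶠ[nhds r] fun t : ℝ => g (t • e₁) := by
      filter_upwards [isOpen_Ioo.mem_nhds hr] with t ht
      rw [hgrad (t • e₁) (by rw [hsn, abs_of_pos ht.1]; exact ht.2.le), hsn,
        abs_of_pos ht.1]
    rw [hev.deriv_eq, hderivg r hr]
    have hkr : k₁ * r ≤ 0 := mul_nonpos_iff.mpr (Or.inr ⟨hk₁0, hr.1.le⟩)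
    have h5 : k₁ * r / (N:ℝ) ≤ 0 := div_nonpos_of_nonpos_of_nonneg hkr hN0.le
    have h6 : (0:ℝ) * r ^ 3 / (2 * (N:ℝ) * ((N:ℝ) + 2)) = 0 := by ring
    linarith
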